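/- Let S ⊆ S^{ℓ−1} be a finite set of unit vectors in ℝ^ℓ with min_{‖x‖=1} max_{u∈S} uᵀx = θ > 0. For a tensor T ∈ ℝ^{ℓ×m×n}, consider M = max{⟨T, Z⟩ : Z ∈ ℝ^{ℓ×m×n}, ‖Z(x,•,•)‖_σ ≤ 1 for all x ∈ S}, where Z(x,•,•) = Σ_i x_i Z_i and ‖·‖_σ denotes the matrix spectral norm. Then ‖T‖_* ≤ M ≤ ‖T‖_*/θ, where ‖T‖_* is the tensor nuclear norm. -/

import Mathlib

open Finset

noncomputable section

abbrev E (n : ℕ) := EuclideanSpace ℝ (Fin n)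

/-- The bilinear form `yᵀ A z`. -/
def bil {m n : ℕ} (A : Matrix (Fin m) (Fin n) ℝ) (y : E m) (z : E n) : ℝ :=
  ∑ j, ∑ k, y j * A j k * z k

/-- Values of the trilinear form `⟨T, x⊗y⊗z⟩` over unit vectors; its greatest
element is the tensor spectral norm. -/
def specSet {l m n : ℕ} (T : Fin l → Matrix (Fin m) (Fin n) ℝ) : Set ℝ :=
  {v | ∃ x : E l, ∃ y : E m, ∃ z : E n, ‖x‖ = 1 ∧ ‖y‖ = 1 ∧ ‖z‖ = 1 ∧
    v = ∑ i, x i * bil (T i) y z}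

/-- Frobenius inner product of two ℓ×m×n tensors given by slices. -/
def tinner {l m n : ℕ} (T Z : Fin l → Matrix (Fin m) (Fin n) ℝ) : ℝ :=
  ∑ i, ∑ j, ∑ k, T i j k * Z i j k

lemma sum3comm {a b c : ℕ} (f : Fin a → Fin b → Fin c → ℝ) :
    ∑ j, ∑ k, ∑ i, f i j k = ∑ i, ∑ j, ∑ k, f i j k :=
  calc ∑ j, ∑ k, ∑ i, f i j k
      = ∑ j, ∑ i, ∑ k, f i j k := Finset.sum_congr rfl fun _ _ => Finset.sum_comm
    _ = ∑ i, ∑ j, ∑ k, f i j k := Finset.sum_comm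

lemma bil_sum_smul {l m n : ℕ} (Z : Fin l → Matrix (Fin m) (Fin n) ℝ)
    (x : E l) (y : E m) (z : E n) :
    bil (∑ i, x i • Z i) y z = ∑ i, x i * bil (Z i) y z := by
  simp only [bil, Matrix.sum_apply, Matrix.smul_apply, smul_eq_mul,
    Finset.mul_sum, Finset.sum_mul]
  rw [sum3comm (fun i j k => y j * (x i * Z i j k) * z k)]
  exact Finset.sum_congr rfl fun i _ => Finset.sum_congr rfl fun j _ =>
    Finset.sum_congr rfl fun k _ => by ring

lemma bil_smul {m n : ℕ} (A : Matrix (Fin m) (Fin n) ℝ) (c : ℝ)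
    (y : E m) (z : E n) : bil (c • A) y z = c * bil A y z := by
  simp only [bil, Matrix.smul_apply, smul_eq_mul, Finset.mul_sum]
  refine Finset.sum_congr rfl fun j _ => Finset.sum_congr rfl fun k _ => ?_
  ring

lemma tinner_smul {l m n : ℕ} (T Z : Fin l → Matrix (Fin m) (Fin n) ℝ) (c : ℝ) :
    tinner T (fun i => c • Z i) = c * tinner T Z := by
  simp only [tinner, Matrix.smul_apply, smul_eq_mul, Finset.mul_sum]
  refine Finset.sum_congr rfl fun i _ => Finset.sum_congr rfl fun j _ =>
    Finset.sum_congr rfl fun k _ => ?_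
  ring

/-- relaxed dual SDP value M satisfies ‖T‖_* ≤ M ≤ ‖T‖_*/θ. -/
theorem stmt11 {l m n : ℕ} (S : Set (E l)) (hSfin : S.Finite)
    (hSunit : ∀ u ∈ S, ‖u‖ = 1)
    (θ : ℝ) (hθ : 0 < θ)
    -- min over unit x of (max over u ∈ S of uᵀx) equals θ:
    (hθlb : ∀ x : E l, ‖x‖ = 1 → ∃ u ∈ S, θ ≤ ∑ i, u i * x i)
    (hθatt : ∃ x : E l, ‖x‖ = 1 ∧ ∀ u ∈ S, ∑ i, u i * x i ≤ θ)
    (T : Fin l → Matrix (Fin m) (Fin n) ℝ) (N M : ℝ)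
    -- N = ‖T‖_* via the dual characterization:
    (hN : IsGreatest {v : ℝ | ∃ Z : Fin l → Matrix (Fin m) (Fin n) ℝ,
      (∀ (x : E l) (y : E m) (z : E n), ‖x‖ = 1 → ‖y‖ = 1 → ‖z‖ = 1 →
        ∑ i, x i * bil (Z i) y z ≤ 1) ∧ v = tinner T Z} N)
    -- M = max ⟨T,Z⟩ subject to ‖Z(x,•,•)‖_σ ≤ 1 for all x ∈ S:
    (hM : IsGreatest {v : ℝ | ∃ Z : Fin l → Matrix (Fin m) (Fin n) ℝ,
      (∀ x ∈ S, ∀ (y : E m) (z : E n), ‖y‖ = 1 → ‖z‖ = 1 →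
        bil (∑ i, x i • Z i) y z ≤ 1) ∧ v = tinner T Z} M) :
    N ≤ M ∧ M ≤ N / θ := by
  constructor
  · -- N ≤ M : any N-feasible Z is M-feasible
    obtain ⟨Z₀, hZ₀feas, hZ₀val⟩ := hN.1
    refine hM.2 ⟨Z₀, fun x hx y z hy hz => ?_, hZ₀val⟩
    rw [bil_sum_smul]
    exact hZ₀feas x y z (hSunit x hx) hy hz
  · -- M ≤ N / θ : scale an M-feasible Z by θ to get an N-feasible tensor
    obtain ⟨Z, hZfeas, hZval⟩ := hM.1
    rw [le_div_iff₀ hθ]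
    have hfeas : ∀ (x : E l) (y : E m) (z : E n), ‖x‖ = 1 → ‖y‖ = 1 → ‖z‖ = 1 →
        ∑ i, x i * bil ((fun i => θ • Z i) i) y z ≤ 1 := by
      intro x y z hx hy hz
      simp only [bil_smul]
      have key : θ * ∑ i, x i * bil (Z i) y z ≤ 1 := by
        set w : E l := (WithLp.toLp 2 (fun i => bil (Z i) y z) : EuclideanSpace ℝ (Fin l)) with hw
        have hxw : ∑ i, x i * bil (Z i) y z = (inner ℝ x w : ℝ) := by
          simp [hw, PiLp.inner_apply, RCLike.inner_apply, mul_comm]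
        by_cases hw0 : w = 0
        · rw [hxw, hw0, inner_zero_right, mul_zero]
          norm_num
        · have hwn : (0:ℝ) < ‖w‖ := norm_pos_iff.mpr hw0
          set x' : E l := ‖w‖⁻¹ • w with hx'
          have hx'n : ‖x'‖ = 1 := by
            rw [hx', norm_smul, norm_inv, norm_norm, inv_mul_cancel₀ hwn.ne']
          obtain ⟨u, huS, hu⟩ := hθlb x' hx'n
          have huw : θ * ‖w‖ ≤ ∑ i, u i * w i := by
            have hrw : ∑ i, u i * x' i = ‖w‖⁻¹ * ∑ i, u i * w i := by
              simp only [hx', PiLp.smul_apply, smul_eq_mul, Finset.mul_sum]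
              exact Finset.sum_congr rfl fun i _ => by ring
            rw [hrw] at hu
            calc θ * ‖w‖ ≤ (‖w‖⁻¹ * ∑ i, u i * w i) * ‖w‖ :=
                  mul_le_mul_of_nonneg_right hu hwn.le
              _ = ∑ i, u i * w i := by field_simp
          have hle1 : ∑ i, u i * w i ≤ 1 := by
            have h := hZfeas u huS y z hy hz
            rw [bil_sum_smul] at h; simpa [hw] using h
          have hCS : (inner ℝ x w : ℝ) ≤ ‖w‖ := by
            calc (inner ℝ x w : ℝ) ≤ ‖x‖ * ‖w‖ := real_inner_le_norm x w
              _ = ‖w‖ := by rw [hx, one_mul]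
          calc θ * ∑ i, x i * bil (Z i) y z = θ * (inner ℝ x w : ℝ) := by rw [hxw]
            _ ≤ θ * ‖w‖ := mul_le_mul_of_nonneg_left hCS hθ.le
            _ ≤ ∑ i, u i * w i := huw
            _ ≤ 1 := hle1
      calc ∑ i, x i * (θ * bil (Z i) y z) = θ * ∑ i, x i * bil (Z i) y z := by
            rw [Finset.mul_sum]; exact Finset.sum_congr rfl fun i _ => by ring
        _ ≤ 1 := key
    have hmem : θ * tinner T Z ∈ {v : ℝ | ∃ Z : Fin l → Matrix (Fin m) (Fin n) ℝ,
        (∀ (x : E l) (y : E m) (z : E n), ‖x‖ = 1 → ‖y‖ = 1 → ‖z‖ = 1 →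
          ∑ i, x i * bil (Z i) y z ≤ 1) ∧ v = tinner T Z} :=
      ⟨fun i => θ • Z i, hfeas, (tinner_smul T Z θ).symm⟩
    rw [hZval, mul_comm]
    exact hN.2 hmem
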